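/- arXiv:1812.10250 — 13 statements merged into one kernel-verified Lean document; each statement's English description precedes it below -/
import Mathlib

section
/- For every ε > 0, f ∈ V* and g ∈ Q*, there exists a unique pair (u, p) ∈ V × Q solving the ε-Stokes system ES(ε), i.e. satisfying ⟨u,φ⟩_V + b(φ,p) = f(φ) for all φ ∈ V and ε·⟨p,ψ⟩_Q − b(u,ψ) = ε·g(ψ) for all ψ ∈ Q. (Abstract form of Theorem 2.7: well-posedness of the ε-Stokes problem.) -/
open scoped RealInnerProductSpace

/-- Abstract form of Theorem 2.7: well-posedness of the ε-Stokes problem ES(ε). -/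
theorem epsStokes_wellPosed {V Q : Type*}
    [NormedAddCommGroup V] [InnerProductSpace ℝ V] [CompleteSpace V]
    [NormedAddCommGroup Q] [InnerProductSpace ℝ Q] [CompleteSpace Q]
    (b : V →L[ℝ] Q →L[ℝ] ℝ)
    (ε : ℝ) (hε : 0 < ε) (f : V →L[ℝ] ℝ) (g : Q →L[ℝ] ℝ) :
    ∃! up : V × Q,
      (∀ φ : V, ⟪up.1, φ⟫ + b φ up.2 = f φ) ∧
      (∀ ψ : Q, ε * ⟪up.2, ψ⟫ - b up.1 ψ = ε * g ψ) := by
  classical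
  -- Riesz representative of f
  set uf : V := (InnerProductSpace.toDual ℝ V).symm f with huf_def
  have huf : ∀ φ : V, ⟪uf, φ⟫ = f φ := fun φ => InnerProductSpace.toDual_symm_apply
  -- T p is the Riesz representative of φ ↦ b φ p
  set T : Q →L[ℝ] V :=
    ((InnerProductSpace.toDual ℝ V).symm.toContinuousLinearEquiv.toContinuousLinearMap).comp
      b.flip with hT_def
  have hT : ∀ (p : Q) (φ : V), ⟪T p, φ⟫ = b φ p := by
    intro p φ
    simp [hT_def, InnerProductSpace.toDual_symm_apply]
  -- the bilinear form a(p, ψ) = ε ⟪p, ψ⟫ + b (T p) ψ on Q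
  set J : Q →L[ℝ] Q →L[ℝ] ℝ := innerSL ℝ with hJ_def
  set a : Q →L[ℝ] Q →L[ℝ] ℝ := ε • J + b.comp T with ha_def
  have ha : ∀ p ψ : Q, a p ψ = ε * ⟪p, ψ⟫ + b (T p) ψ := by
    intro p ψ; simp [ha_def, hJ_def, innerSL_apply_apply]; exact Or.inl rfl
  have hcoer : IsCoercive a := by
    refine ⟨ε, hε, fun p => ?_⟩
    have h1 : a p p = ε * ⟪p, p⟫ + ⟪T p, T p⟫ := by rw [ha, hT p (T p)]
    have h2 : (0 : ℝ) ≤ ⟪T p, T p⟫ := real_inner_self_nonneg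
    have h3 : ε * ‖p‖ * ‖p‖ = ε * ⟪p, p⟫ := by
      rw [real_inner_self_eq_norm_mul_norm]; ring
    linarith
  -- right-hand side functional
  set L : Q →L[ℝ] ℝ := ε • g + b uf with hL_def
  have hL : ∀ ψ : Q, L ψ = ε * g ψ + b uf ψ := by intro ψ; simp [hL_def]
  -- solve a p ψ = L ψ by Lax–Milgram
  set p : Q := hcoer.continuousLinearEquivOfBilin.symm
    ((InnerProductSpace.toDual ℝ Q).symm L) with hp_def
  have hp : ∀ ψ : Q, a p ψ = L ψ := by
    intro ψ
    calc a p ψ = ⟪hcoer.continuousLinearEquivOfBilin p, ψ⟫ :=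
          (hcoer.continuousLinearEquivOfBilin_apply p ψ).symm
      _ = ⟪(InnerProductSpace.toDual ℝ Q).symm L, ψ⟫ := by
          rw [hp_def, ContinuousLinearEquiv.apply_symm_apply]
      _ = L ψ := InnerProductSpace.toDual_symm_apply
  set u : V := uf - T p with hu_def
  have heq1 : ∀ φ : V, ⟪u, φ⟫ + b φ p = f φ := by
    intro φ
    rw [hu_def, inner_sub_left, hT p φ, huf φ]; ring
  have heq2 : ∀ ψ : Q, ε * ⟪p, ψ⟫ - b u ψ = ε * g ψ := by
    intro ψ
    have hb : b u ψ = b uf ψ - b (T p) ψ := by rw [hu_def, map_sub]; rfl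
    have := hp ψ
    rw [ha, hL] at this
    rw [hb]; linarith
  refine ⟨(u, p), ⟨heq1, heq2⟩, ?_⟩
  rintro ⟨u', p'⟩ ⟨h1, h2⟩
  -- uniqueness: the difference solves the homogeneous problem
  have e1 : ∀ φ : V, ⟪u' - u, φ⟫ + b φ (p' - p) = 0 := by
    intro φ
    have w1 := h1 φ
    have w2 := heq1 φ
    rw [inner_sub_left, map_sub]
    linarith
  have e2 : ∀ ψ : Q, ε * ⟪p' - p, ψ⟫ - b (u' - u) ψ = 0 := by
    intro ψ
    have w1 := h2 ψ
    have w2 := heq2 ψ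
    have hb : b (u' - u) ψ = b u' ψ - b u ψ := by rw [map_sub]; rfl
    rw [inner_sub_left, hb]
    linarith
  have k1 := e1 (u' - u)
  have k2 := e2 (p' - p)
  set x : ℝ := ⟪u' - u, u' - u⟫ with hx_def
  set y : ℝ := ⟪p' - p, p' - p⟫ with hy_def
  set c : ℝ := b (u' - u) (p' - p) with hc_def
  have hn1 : (0 : ℝ) ≤ x := real_inner_self_nonneg
  have hn2 : (0 : ℝ) ≤ y := real_inner_self_nonneg
  have hey : (0 : ℝ) ≤ ε * y := mul_nonneg hε.le hn2
  have hz1 : x = 0 := by linarith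
  have hzey : ε * y = 0 := by linarith
  have hz2 : y = 0 := by
    rcases mul_eq_zero.mp hzey with h | h
    · exact absurd h hε.ne'
    · exact h
  have hu' : u' = u := by
    have h0 : u' - u = 0 := inner_self_eq_zero.mp (hx_def ▸ hz1)
    exact sub_eq_zero.mp h0
  have hp' : p' = p := by
    have h0 : p' - p = 0 := inner_self_eq_zero.mp (hy_def ▸ hz2)
    exact sub_eq_zero.mp h0
  exact Prod.ext hu' hp'
end

section
/- Let ε > 0, h ∈ Q*, and suppose (v, q) ∈ V × Q satisfies ⟨v,φ⟩_V + b(φ,q) = 0 for all φ ∈ V and ε·⟨q,ψ⟩_Q − b(v,ψ) = h(ψ) for all ψ ∈ Q. Then ‖q‖_Q ≤ (1/ε)·‖h‖_{Q*} and ‖v‖_V ≤ (‖b‖/ε)·‖h‖_{Q*}. (Abstract form of Lemma 3.1.) -/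
open scoped RealInnerProductSpace

/-- Abstract form of Lemma 3.1: a priori bounds for the homogeneous ε-Stokes system with
right-hand side `h ∈ Q*`. -/
theorem epsStokes_basic_estimate {V Q : Type*}
    [NormedAddCommGroup V] [InnerProductSpace ℝ V] [CompleteSpace V]
    [NormedAddCommGroup Q] [InnerProductSpace ℝ Q] [CompleteSpace Q]
    (b : V →L[ℝ] Q →L[ℝ] ℝ)
    (ε : ℝ) (hε : 0 < ε) (h : Q →L[ℝ] ℝ) (v : V) (q : Q)
    (h1 : ∀ φ : V, ⟪v, φ⟫ + b φ q = 0)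
    (h2 : ∀ ψ : Q, ε * ⟪q, ψ⟫ - b v ψ = h ψ) :
    ‖q‖ ≤ (1 / ε) * ‖h‖ ∧ ‖v‖ ≤ (‖b‖ / ε) * ‖h‖ := by
  have hv : b v q = -‖v‖ ^ 2 := by
    have := h1 v
    rw [real_inner_self_eq_norm_sq] at this
    linarith
  have hq : ε * ‖q‖ ^ 2 + ‖v‖ ^ 2 = h q := by
    have := h2 q
    rw [real_inner_self_eq_norm_sq, hv] at this
    linarith
  have hhq : h q ≤ ‖h‖ * ‖q‖ := by
    calc h q ≤ |h q| := le_abs_self _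
      _ = ‖h q‖ := (Real.norm_eq_abs _).symm
      _ ≤ ‖h‖ * ‖q‖ := h.le_opNorm q
  have hq2 : ε * ‖q‖ ^ 2 ≤ ‖h‖ * ‖q‖ := by nlinarith [sq_nonneg ‖v‖]
  have hqle : ‖q‖ ≤ (1 / ε) * ‖h‖ := by
    rcases eq_or_lt_of_le (norm_nonneg q) with h0 | h0
    · rw [← h0]; positivity
    · rw [div_mul_eq_mul_div, le_div_iff₀ hε, one_mul]
      nlinarith
  refine ⟨hqle, ?_⟩
  have hv2 : ‖v‖ ^ 2 ≤ ‖b‖ * ‖v‖ * ‖q‖ := by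
    have habs : |b v q| ≤ ‖b‖ * ‖v‖ * ‖q‖ := by
      calc |b v q| = ‖b v q‖ := rfl
        _ ≤ ‖b v‖ * ‖q‖ := (b v).le_opNorm q
        _ ≤ ‖b‖ * ‖v‖ * ‖q‖ := by
            gcongr; exact b.le_opNorm v
    have : ‖v‖ ^ 2 = |b v q| := by rw [hv, abs_neg, abs_of_nonneg (by positivity)]
    linarith
  have hvle : ‖v‖ ≤ ‖b‖ * ‖q‖ := by
    rcases eq_or_lt_of_le (norm_nonneg v) with h0 | h0
    · rw [← h0]; positivity
    · nlinarith
  calc ‖v‖ ≤ ‖b‖ * ‖q‖ := hvle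
    _ ≤ ‖b‖ * ((1 / ε) * ‖h‖) := by gcongr
    _ = (‖b‖ / ε) * ‖h‖ := by ring
end

section
/- Let ε > 0, f ∈ V*, g ∈ Q*, let (u_ε, p_ε) ∈ V × Q solve the ε-Stokes system ES(ε) and let (u_PP, p_PP) ∈ V × Q solve the pressure-Poisson system PP (with the same f and g). Then ‖p_ε − p_PP‖_Q ≤ (1/ε)·D(u_PP) and ‖u_ε − u_PP‖_V ≤ (‖b‖/ε)·D(u_PP). (Quantitative part of Theorem 3.2.) -/
open scoped RealInnerProductSpace

/-- Quantitative part of Theorem 3.2: error between the solutions of ES(ε) and PP, in terms of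
the divergence seminorm `D(u_PP) = ‖b u_PP‖ = sup{|b(u_PP,ψ)| : ‖ψ‖ ≤ 1}`. -/
theorem epsStokes_to_pressurePoisson_estimate {V Q : Type*}
    [NormedAddCommGroup V] [InnerProductSpace ℝ V] [CompleteSpace V]
    [NormedAddCommGroup Q] [InnerProductSpace ℝ Q] [CompleteSpace Q]
    (b : V →L[ℝ] Q →L[ℝ] ℝ)
    (ε : ℝ) (hε : 0 < ε) (f : V →L[ℝ] ℝ) (g : Q →L[ℝ] ℝ)
    (uε : V) (pε : Q) (uPP : V) (pPP : Q)
    (hES1 : ∀ φ : V, ⟪uε, φ⟫ + b φ pε = f φ)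
    (hES2 : ∀ ψ : Q, ε * ⟪pε, ψ⟫ - b uε ψ = ε * g ψ)
    (hPP1 : ∀ φ : V, ⟪uPP, φ⟫ + b φ pPP = f φ)
    (hPP2 : ∀ ψ : Q, ⟪pPP, ψ⟫ = g ψ) :
    ‖pε - pPP‖ ≤ (1 / ε) * ‖b uPP‖ ∧ ‖uε - uPP‖ ≤ (‖b‖ / ε) * ‖b uPP‖ := by
  set eu := uε - uPP with heu
  set ep := pε - pPP with hep
  -- difference of first equations
  have h1 : ∀ φ : V, ⟪eu, φ⟫ = - b φ ep := by
    intro φ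
    have := hES1 φ
    have := hPP1 φ
    simp only [heu, hep, inner_sub_left, map_sub]
    linarith [hES1 φ, hPP1 φ]
  -- difference of second equations
  have h2 : ∀ ψ : Q, ε * ⟪ep, ψ⟫ = b uε ψ := by
    intro ψ
    have hs := hES2 ψ
    have hp := hPP2 ψ
    simp only [hep, inner_sub_left]
    nlinarith [hES2 ψ, hPP2 ψ]
  -- key: ε‖ep‖² = -‖eu‖² + b uPP ep
  have key : ε * ‖ep‖ ^ 2 ≤ (b uPP) ep := by
    have h2e := h2 ep
    have h1e := h1 eu
    have hbu : b uε ep = b eu ep + b uPP ep := by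
      have : uε = eu + uPP := by simp [heu]
      rw [this]; simp
    have hn1 : ⟪ep, ep⟫ = ‖ep‖ ^ 2 := real_inner_self_eq_norm_sq ep
    have hn2 : ⟪eu, eu⟫ = ‖eu‖ ^ 2 := real_inner_self_eq_norm_sq eu
    nlinarith [sq_nonneg ‖eu‖]
  have hbound : (b uPP) ep ≤ ‖b uPP‖ * ‖ep‖ := by
    calc (b uPP) ep ≤ |(b uPP) ep| := le_abs_self _
    _ ≤ ‖b uPP‖ * ‖ep‖ := (b uPP).le_opNorm ep
  have hp : ‖ep‖ ≤ (1 / ε) * ‖b uPP‖ := by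
    rcases eq_or_lt_of_le (norm_nonneg ep) with h0 | h0
    · rw [← h0]
      positivity
    · rw [div_mul_eq_mul_div, le_div_iff₀ hε]
      nlinarith
  refine ⟨hp, ?_⟩
  have hu : ‖eu‖ ≤ ‖b‖ * ‖ep‖ := by
    rcases eq_or_lt_of_le (norm_nonneg eu) with h0 | h0
    · rw [← h0]; positivity
    · have h1e := h1 eu
      have hn2 : ⟪eu, eu⟫ = ‖eu‖ ^ 2 := real_inner_self_eq_norm_sq eu
      have hb : -(b eu ep) ≤ ‖b‖ * ‖eu‖ * ‖ep‖ := by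
        calc -(b eu ep) ≤ |b eu ep| := neg_le_abs _
        _ ≤ ‖b eu‖ * ‖ep‖ := (b eu).le_opNorm ep
        _ ≤ ‖b‖ * ‖eu‖ * ‖ep‖ := by
            gcongr
            exact b.le_opNorm eu
      nlinarith
  calc ‖eu‖ ≤ ‖b‖ * ‖ep‖ := hu
  _ ≤ ‖b‖ * ((1 / ε) * ‖b uPP‖) := by gcongr
  _ = (‖b‖ / ε) * ‖b uPP‖ := by ring
end

section
/- Let f ∈ V*, g ∈ Q*, let (u_PP, p_PP) ∈ V × Q solve the pressure-Poisson system PP, and for each ε > 0 let (u_ε, p_ε) ∈ V × Q solve the ε-Stokes system ES(ε). Then u_ε converges to u_PP in the norm of V and p_ε converges to p_PP in the norm of Q as ε → ∞. (Convergence part of Theorem 3.2.) -/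
open scoped RealInnerProductSpace

/-- Convergence part of Theorem 3.2: the solutions of ES(ε) converge strongly to the solution
of PP as ε → ∞. -/
theorem epsStokes_tendsto_pressurePoisson {V Q : Type*}
    [NormedAddCommGroup V] [InnerProductSpace ℝ V] [CompleteSpace V]
    [NormedAddCommGroup Q] [InnerProductSpace ℝ Q] [CompleteSpace Q]
    (b : V →L[ℝ] Q →L[ℝ] ℝ)
    (f : V →L[ℝ] ℝ) (g : Q →L[ℝ] ℝ)
    (uPP : V) (pPP : Q)
    (hPP1 : ∀ φ : V, ⟪uPP, φ⟫ + b φ pPP = f φ)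
    (hPP2 : ∀ ψ : Q, ⟪pPP, ψ⟫ = g ψ)
    (u : ℝ → V) (p : ℝ → Q)
    (hsol : ∀ ε : ℝ, 0 < ε →
      (∀ φ : V, ⟪u ε, φ⟫ + b φ (p ε) = f φ) ∧
      (∀ ψ : Q, ε * ⟪p ε, ψ⟫ - b (u ε) ψ = ε * g ψ)) :
    Filter.Tendsto u Filter.atTop (nhds uPP) ∧
    Filter.Tendsto p Filter.atTop (nhds pPP) := by
  set C := ‖b uPP‖ with hC
  have hC0 : 0 ≤ C := norm_nonneg _
  have key : ∀ ε : ℝ, 0 < ε →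
      ‖p ε - pPP‖ ≤ C / ε ∧ ‖u ε - uPP‖ ≤ ‖b‖ * (C / ε) := by
    intro ε hε
    obtain ⟨h1, h2⟩ := hsol ε hε
    set eu := u ε - uPP with heu_def
    set ep := p ε - pPP with hep_def
    have e1 : ∀ φ : V, ⟪eu, φ⟫ + b φ ep = 0 := by
      intro φ
      have ha := h1 φ
      have hb' := hPP1 φ
      simp only [heu_def, hep_def, inner_sub_left, map_sub]
      linarith
    have e2 : ε * ⟪ep, ep⟫ = b (u ε) ep := by
      have h2' := h2 ep
      have hg := hPP2 ep
      simp only [hep_def, inner_sub_left] at h2' hg ⊢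
      linear_combination h2' - ε * hg
    have hbeu : b eu ep = - ‖eu‖ ^ 2 := by
      have := e1 eu
      rw [real_inner_self_eq_norm_sq] at this
      linarith
    have hsum : ε * ‖ep‖ ^ 2 + ‖eu‖ ^ 2 = b uPP ep := by
      have hu : u ε = eu + uPP := by simp [heu_def]
      rw [real_inner_self_eq_norm_sq] at e2
      rw [hu] at e2
      simp only [map_add, ContinuousLinearMap.add_apply] at e2
      rw [hbeu] at e2
      linarith
    have hCb : b uPP ep ≤ C * ‖ep‖ := by
      calc b uPP ep ≤ |b uPP ep| := le_abs_self _
        _ = ‖(b uPP) ep‖ := rfl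
        _ ≤ ‖b uPP‖ * ‖ep‖ := (b uPP).le_opNorm ep
    have hep : ‖ep‖ ≤ C / ε := by
      rcases eq_or_lt_of_le (norm_nonneg ep) with h0 | h0
      · rw [← h0]; positivity
      · rw [le_div_iff₀ hε]
        nlinarith [sq_nonneg ‖eu‖]
    have heu2 : ‖eu‖ ^ 2 ≤ ‖b‖ * ‖eu‖ * ‖ep‖ := by
      have hop := b.le_opNorm₂ eu ep
      have : ‖b eu ep‖ = ‖eu‖ ^ 2 := by
        rw [hbeu, norm_neg, Real.norm_eq_abs, abs_of_nonneg (by positivity)]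
      linarith [hop, this.ge.trans hop]
    have heu : ‖eu‖ ≤ ‖b‖ * ‖ep‖ := by
      rcases eq_or_lt_of_le (norm_nonneg eu) with h0 | h0
      · rw [← h0]; positivity
      · nlinarith
    refine ⟨hep, heu.trans ?_⟩
    exact mul_le_mul_of_nonneg_left hep (norm_nonneg b)
  have hdiv : Filter.Tendsto (fun ε : ℝ => C / ε) Filter.atTop (nhds 0) :=
    Filter.Tendsto.div_atTop tendsto_const_nhds Filter.tendsto_id
  have hp : Filter.Tendsto (fun ε => ‖p ε - pPP‖) Filter.atTop (nhds 0) := by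
    refine squeeze_zero' ?_ ?_ hdiv
    · exact Filter.Eventually.of_forall fun ε => norm_nonneg _
    · exact (Filter.eventually_gt_atTop 0).mono fun ε hε => (key ε hε).1
  have hu : Filter.Tendsto (fun ε => ‖u ε - uPP‖) Filter.atTop (nhds 0) := by
    refine squeeze_zero' (g := fun ε => ‖b‖ * (C / ε)) ?_ ?_ ?_
    · exact Filter.Eventually.of_forall fun ε => norm_nonneg _
    · exact (Filter.eventually_gt_atTop 0).mono fun ε hε => (key ε hε).2
    · simpa using hdiv.const_mul ‖b‖
  exact ⟨tendsto_iff_norm_sub_tendsto_zero.mpr hu,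
    tendsto_iff_norm_sub_tendsto_zero.mpr hp⟩
end

section
/- Let ε > 0, f ∈ V*, g ∈ Q*, let (u_ε, p_ε) solve the ε-Stokes system ES(ε) and (u_PP, p_PP) solve the pressure-Poisson system PP. Suppose (v¹, q¹) ∈ V × Q satisfies ⟨v¹,φ⟩_V + b(φ,q¹) = 0 for all φ ∈ V and ⟨q¹,ψ⟩_Q = b(u_PP, ψ) for all ψ ∈ Q. Then ‖ε·(u_ε − u_PP) − v¹‖_V ≤ (‖b‖/ε)·D(v¹) and ‖ε·(p_ε − p_PP) − q¹‖_Q ≤ (1/ε)·D(v¹). (Abstract form of Theorem 3.4, first-order asymptotics as ε → ∞.) -/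
open scoped RealInnerProductSpace

/-- Abstract form of Theorem 3.4: first-order asymptotics of the ε-Stokes solutions as ε → ∞,
with the divergence seminorm `D(v) = ‖b v‖ = sup{|b(v,ψ)| : ‖ψ‖ ≤ 1}`. -/
theorem epsStokes_first_order_asymptotics {V Q : Type*}
    [NormedAddCommGroup V] [InnerProductSpace ℝ V] [CompleteSpace V]
    [NormedAddCommGroup Q] [InnerProductSpace ℝ Q] [CompleteSpace Q]
    (b : V →L[ℝ] Q →L[ℝ] ℝ)
    (ε : ℝ) (hε : 0 < ε) (f : V →L[ℝ] ℝ) (g : Q →L[ℝ] ℝ)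
    (uε : V) (pε : Q) (uPP : V) (pPP : Q) (v1 : V) (q1 : Q)
    (hES1 : ∀ φ : V, ⟪uε, φ⟫ + b φ pε = f φ)
    (hES2 : ∀ ψ : Q, ε * ⟪pε, ψ⟫ - b uε ψ = ε * g ψ)
    (hPP1 : ∀ φ : V, ⟪uPP, φ⟫ + b φ pPP = f φ)
    (hPP2 : ∀ ψ : Q, ⟪pPP, ψ⟫ = g ψ)
    (hv1 : ∀ φ : V, ⟪v1, φ⟫ + b φ q1 = 0)
    (hq1 : ∀ ψ : Q, ⟪q1, ψ⟫ = b uPP ψ) :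
    ‖ε • (uε - uPP) - v1‖ ≤ (‖b‖ / ε) * ‖b v1‖ ∧
    ‖ε • (pε - pPP) - q1‖ ≤ (1 / ε) * ‖b v1‖ := by
  set w : V := ε • (uε - uPP) - v1 with hw
  set r : Q := ε • (pε - pPP) - q1 with hr
  have hA : ∀ φ : V, ⟪w, φ⟫ + b φ r = 0 := by
    intro φ
    have hwφ : ⟪w, φ⟫ = ε * ⟪uε, φ⟫ - ε * ⟪uPP, φ⟫ - ⟪v1, φ⟫ := by
      simp [hw, inner_sub_left, real_inner_smul_left]
      ring
    have hbφ : b φ r = ε * b φ pε - ε * b φ pPP - b φ q1 := by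
      simp [hr, map_sub, map_smul, smul_eq_mul]
      ring
    rw [hwφ, hbφ]
    linear_combination ε * hES1 φ - ε * hPP1 φ - hv1 φ
  have hB : ∀ ψ : Q, ε * ⟪r, ψ⟫ = b w ψ + b v1 ψ := by
    intro ψ
    have hrψ : ⟪r, ψ⟫ = ε * ⟪pε, ψ⟫ - ε * ⟪pPP, ψ⟫ - ⟪q1, ψ⟫ := by
      simp [hr, inner_sub_left, real_inner_smul_left]
      ring
    have hbw : b w ψ = ε * b uε ψ - ε * b uPP ψ - b v1 ψ := by
      simp [hw, map_sub, map_smul, smul_eq_mul]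
      ring
    rw [hrψ, hbw]
    linear_combination ε * hES2 ψ - ε ^ 2 * hPP2 ψ - ε * hq1 ψ
  have hww : ‖w‖ ^ 2 = - b w r := by
    have h := hA w
    have h2 : ⟪w, w⟫ = ‖w‖ ^ 2 := real_inner_self_eq_norm_sq w
    linarith
  have hrr : ε * ‖r‖ ^ 2 + ‖w‖ ^ 2 = b v1 r := by
    have h := hB r
    have h2 : ⟪r, r⟫ = ‖r‖ ^ 2 := real_inner_self_eq_norm_sq r
    rw [h2] at h
    linarith
  have hbv1 : b v1 r ≤ ‖b v1‖ * ‖r‖ :=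
    le_trans (le_abs_self _) ((b v1).le_opNorm r)
  -- bound on r
  have hr_le : ‖r‖ ≤ (1 / ε) * ‖b v1‖ := by
    rcases eq_or_lt_of_le (norm_nonneg r) with h0 | h0
    · rw [← h0]
      positivity
    · have key : ε * ‖r‖ ^ 2 ≤ ‖b v1‖ * ‖r‖ := by nlinarith [sq_nonneg ‖w‖]
      have : ε * ‖r‖ ≤ ‖b v1‖ := by
        have := (mul_le_mul_iff_of_pos_right h0).mp (by nlinarith : (ε * ‖r‖) * ‖r‖ ≤ ‖b v1‖ * ‖r‖)
        linarith
      rw [one_div, inv_mul_eq_div, le_div_iff₀ hε]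
      linarith
  -- bound on w
  have hbwr : ‖w‖ ^ 2 ≤ ‖b‖ * ‖w‖ * ‖r‖ := by
    have h1 : - b w r ≤ |b w r| := neg_le_abs _
    have h2 : |b w r| ≤ ‖b w‖ * ‖r‖ := (b w).le_opNorm r
    have h3 : ‖b w‖ ≤ ‖b‖ * ‖w‖ := b.le_opNorm w
    nlinarith [norm_nonneg r]
  have hw_le : ‖w‖ ≤ ‖b‖ * ‖r‖ := by
    rcases eq_or_lt_of_le (norm_nonneg w) with h0 | h0
    · rw [← h0]
      positivity
    · have := (mul_le_mul_iff_of_pos_right h0).mp (by nlinarith : ‖w‖ * ‖w‖ ≤ (‖b‖ * ‖r‖) * ‖w‖)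
      linarith
  constructor
  · calc ‖w‖ ≤ ‖b‖ * ‖r‖ := hw_le
      _ ≤ ‖b‖ * ((1 / ε) * ‖b v1‖) := by
          exact mul_le_mul_of_nonneg_left hr_le (norm_nonneg b)
      _ = (‖b‖ / ε) * ‖b v1‖ := by ring
  · exact hr_le
end

section
/- Let k ≥ 1 be a natural number, ε > 0, f ∈ V*, g ∈ Q*, let (u_ε, p_ε) solve the ε-Stokes system ES(ε) and (u_PP, p_PP) solve the pressure-Poisson system PP. Set v⁽⁰⁾ := u_PP, and suppose v⁽¹⁾, …, v⁽ᵏ⁾ ∈ V and q⁽¹⁾, …, q⁽ᵏ⁾ ∈ Q satisfy, for each 1 ≤ i ≤ k, ⟨v⁽ⁱ⁾,φ⟩_V + b(φ,q⁽ⁱ⁾) = 0 for all φ ∈ V and ⟨q⁽ⁱ⁾,ψ⟩_Q = b(v⁽ⁱ⁻¹⁾, ψ) for all ψ ∈ Q. Then ‖u_ε − (u_PP + Σ_{i=1}^{k} ε^{−i}·v⁽ⁱ⁾)‖_V ≤ (‖b‖/ε^{k+1})·D(v⁽ᵏ⁾) and ‖p_ε − (p_PP + Σ_{i=1}^{k}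 ε^{−i}·q⁽ⁱ⁾)‖_Q ≤ (1/ε^{k+1})·D(v⁽ᵏ⁾). (Abstract form of Theorem 3.5, regular perturbation asymptotics of the ε-Stokes problem.) -/
open scoped RealInnerProductSpace

/-- Abstract form of Theorem 3.5: regular perturbation asymptotics of order k of the ε-Stokes
solutions as ε → ∞, with the divergence seminorm `D(v) = ‖b v‖`. -/
theorem epsStokes_regular_perturbation {V Q : Type*}
    [NormedAddCommGroup V] [InnerProductSpace ℝ V] [CompleteSpace V]
    [NormedAddCommGroup Q] [InnerProductSpace ℝ Q] [CompleteSpace Q]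
    (b : V →L[ℝ] Q →L[ℝ] ℝ)
    (k : ℕ) (hk : 1 ≤ k)
    (ε : ℝ) (hε : 0 < ε) (f : V →L[ℝ] ℝ) (g : Q →L[ℝ] ℝ)
    (uε : V) (pε : Q) (uPP : V) (pPP : Q)
    (v : ℕ → V) (q : ℕ → Q)
    (hES1 : ∀ φ : V, ⟪uε, φ⟫ + b φ pε = f φ)
    (hES2 : ∀ ψ : Q, ε * ⟪pε, ψ⟫ - b uε ψ = ε * g ψ)
    (hPP1 : ∀ φ : V, ⟪uPP, φ⟫ + b φ pPP = f φ)
    (hPP2 : ∀ ψ : Q, ⟪pPP, ψ⟫ = g ψ)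
    (hv0 : v 0 = uPP)
    (hvq : ∀ i : ℕ, 1 ≤ i → i ≤ k →
      (∀ φ : V, ⟪v i, φ⟫ + b φ (q i) = 0) ∧
      (∀ ψ : Q, ⟪q i, ψ⟫ = b (v (i - 1)) ψ)) :
    ‖uε - (uPP + ∑ i ∈ Finset.Icc 1 k, (ε⁻¹) ^ i • v i)‖
      ≤ (‖b‖ / ε ^ (k + 1)) * ‖b (v k)‖ ∧
    ‖pε - (pPP + ∑ i ∈ Finset.Icc 1 k, (ε⁻¹) ^ i • q i)‖
      ≤ (1 / ε ^ (k + 1)) * ‖b (v k)‖ := by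
  set w : V := uε - (uPP + ∑ i ∈ Finset.Icc 1 k, (ε⁻¹) ^ i • v i) with hw
  set r : Q := pε - (pPP + ∑ i ∈ Finset.Icc 1 k, (ε⁻¹) ^ i • q i) with hr
  have hεne : ε ≠ 0 := hε.ne'
  -- Equation (A)
  have hA : ∀ φ : V, ⟪w, φ⟫ + b φ r = 0 := by
    intro φ
    have hterm : ∑ i ∈ Finset.Icc 1 k, ((ε⁻¹) ^ i * ⟪v i, φ⟫)
        + ∑ i ∈ Finset.Icc 1 k, ((ε⁻¹) ^ i * (b φ (q i))) = 0 := by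
      rw [← Finset.sum_add_distrib]
      apply Finset.sum_eq_zero
      intro i hi
      rcases Finset.mem_Icc.mp hi with ⟨h1, h2⟩
      have h := (hvq i h1 h2).1 φ
      linear_combination (ε⁻¹) ^ i * h
    have h1 := hES1 φ
    have h2 := hPP1 φ
    rw [hw, hr]
    simp only [inner_sub_left, inner_add_left, sum_inner, real_inner_smul_left,
      map_sub, map_add, map_sum, map_smul, smul_eq_mul]
    linarith
  -- Equation (B)
  have hB : ∀ ψ : Q, ε * ⟪r, ψ⟫ - b w ψ = (ε⁻¹) ^ k * (b (v k) ψ) := by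
    intro ψ
    have hSum1 : ∑ i ∈ Finset.Icc 1 k, ((ε⁻¹) ^ i * ⟪q i, ψ⟫)
        = ∑ i ∈ Finset.Icc 1 k, ((ε⁻¹) ^ i * (b (v (i - 1)) ψ)) := by
      apply Finset.sum_congr rfl
      intro i hi
      rcases Finset.mem_Icc.mp hi with ⟨h1, h2⟩
      rw [(hvq i h1 h2).2 ψ]
    have hT : ∑ i ∈ Finset.Icc 1 k, ((ε⁻¹) ^ i * (b (v i) ψ))
        - ε * ∑ i ∈ Finset.Icc 1 k, ((ε⁻¹) ^ i * (b (v (i - 1)) ψ))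
        = (ε⁻¹) ^ k * (b (v k) ψ) - b (v 0) ψ := by
      rw [Finset.mul_sum, ← Finset.sum_sub_distrib]
      have hterm : ∀ i ∈ Finset.Icc 1 k,
          (ε⁻¹) ^ i * (b (v i) ψ) - ε * ((ε⁻¹) ^ i * (b (v (i - 1)) ψ))
          = (fun j => (ε⁻¹) ^ j * (b (v j) ψ)) i
            - (fun j => (ε⁻¹) ^ j * (b (v j) ψ)) (i - 1) := by
        intro i hi
        rcases Finset.mem_Icc.mp hi with ⟨h1, _⟩
        obtain ⟨j, rfl⟩ := Nat.exists_eq_add_of_le h1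
        simp only [Nat.add_sub_cancel_left]
        field_simp
        have key : (1 / ε) ^ (1 + j) * ε = (1 / ε) ^ j := by
          rw [add_comm 1 j, pow_succ', one_div, mul_comm, ← mul_assoc, mul_inv_cancel₀ hεne, one_mul]
        linear_combination (-(b (v j)) ψ) * key
      rw [Finset.sum_congr rfl hterm]
      rw [← Finset.Ico_add_one_right_eq_Icc, Finset.sum_Ico_eq_sum_range]
      simp only [Nat.add_sub_cancel, Nat.add_sub_cancel_left]
      have htel := Finset.sum_range_sub (fun j => (ε⁻¹) ^ j * (b (v j) ψ)) k
      simp only [pow_zero, one_mul] at htel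
      rw [← htel]
      apply Finset.sum_congr rfl
      intro i _
      simp [Nat.add_comm 1 i]
    have h1 := hES2 ψ
    have h2 := hPP2 ψ
    rw [hv0] at hT
    have hmul : ε * ∑ i ∈ Finset.Icc 1 k, ((ε⁻¹) ^ i * ⟪q i, ψ⟫)
        = ε * ∑ i ∈ Finset.Icc 1 k, ((ε⁻¹) ^ i * (b (v (i - 1)) ψ)) := by rw [hSum1]
    rw [hw, hr]
    simp only [inner_sub_left, inner_add_left, sum_inner, real_inner_smul_left,
      map_sub, map_add, map_sum, map_smul, ContinuousLinearMap.sub_apply,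
      ContinuousLinearMap.add_apply, ContinuousLinearMap.coe_sum',
      Finset.sum_apply, ContinuousLinearMap.smul_apply, smul_eq_mul]
    linear_combination h1 - ε * h2 - hmul + hT
  -- Norm estimates
  have hbw : |b w r| ≤ ‖b‖ * ‖w‖ * ‖r‖ := by
    calc |b w r| ≤ ‖b w‖ * ‖r‖ := (b w).le_opNorm r
    _ ≤ ‖b‖ * ‖w‖ * ‖r‖ :=
        mul_le_mul_of_nonneg_right (b.le_opNorm w) (norm_nonneg r)
  have hbvk : |b (v k) r| ≤ ‖b (v k)‖ * ‖r‖ := (b (v k)).le_opNorm r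
  have hwsq : ‖w‖ ^ 2 = - b w r := by
    have := hA w
    rw [real_inner_self_eq_norm_sq] at this
    linarith
  have hbwr_nonpos : b w r ≤ 0 := by nlinarith [sq_nonneg ‖w‖]
  have hrsq : ε * ‖r‖ ^ 2 ≤ (ε⁻¹) ^ k * ‖b (v k)‖ * ‖r‖ := by
    have h := hB r
    rw [real_inner_self_eq_norm_sq] at h
    have hik : (0:ℝ) < (ε⁻¹) ^ k := by positivity
    have : (ε⁻¹) ^ k * (b (v k) r) ≤ (ε⁻¹) ^ k * (‖b (v k)‖ * ‖r‖) := by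
      apply mul_le_mul_of_nonneg_left _ hik.le
      exact le_trans (le_abs_self _) hbvk
    nlinarith
  have hkey : ε * ‖r‖ ≤ (ε⁻¹) ^ k * ‖b (v k)‖ := by
    rcases eq_or_lt_of_le (norm_nonneg r) with h0 | h0
    · rw [← h0, mul_zero]
      positivity
    · nlinarith
  have hrle : ‖r‖ ≤ (1 / ε ^ (k + 1)) * ‖b (v k)‖ := by
    have hεpow : (0:ℝ) < ε ^ (k + 1) := by positivity
    rw [div_mul_eq_mul_div, le_div_iff₀ hεpow, one_mul]
    calc ‖r‖ * ε ^ (k + 1) = (ε * ‖r‖) * ε ^ k := by rw [pow_succ]; ring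
      _ ≤ ((ε⁻¹) ^ k * ‖b (v k)‖) * ε ^ k :=
          mul_le_mul_of_nonneg_right hkey (pow_pos hε k).le
      _ = ‖b (v k)‖ := by
          rw [mul_right_comm, ← mul_pow, inv_mul_cancel₀ hεne, one_pow, one_mul]
  have hwle : ‖w‖ ≤ ‖b‖ * ‖r‖ := by
    have h : ‖w‖ ^ 2 ≤ ‖b‖ * ‖w‖ * ‖r‖ := by
      rw [hwsq]
      calc -b w r ≤ |b w r| := neg_le_abs _
      _ ≤ ‖b‖ * ‖w‖ * ‖r‖ := hbw
    rcases eq_or_lt_of_le (norm_nonneg w) with h0 | h0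
    · rw [← h0]; positivity
    · nlinarith
  constructor
  · calc ‖w‖ ≤ ‖b‖ * ‖r‖ := hwle
      _ ≤ ‖b‖ * ((1 / ε ^ (k + 1)) * ‖b (v k)‖) :=
        mul_le_mul_of_nonneg_left hrle (norm_nonneg b)
      _ = (‖b‖ / ε ^ (k + 1)) * ‖b (v k)‖ := by ring
  · exact hrle
end

section
/- Let X and Y be real Banach spaces, let A, B : X → Y be continuous linear maps, suppose A is bijective with continuous inverse A⁻¹, let s > 0, and suppose A + s·B is bijective with continuous inverse (A + s·B)⁻¹. Then for every k ∈ ℕ and every f ∈ Y, ‖(A + s·B)⁻¹ f − A⁻¹ (Σ_{i=0}^{k} (−s·(B ∘ A⁻¹))^i f)‖ ≤ ‖(A + s·B)⁻¹‖ · s^{k+1} · ‖(B ∘ A⁻¹)^{k+1} f‖, where ‖(A + s·B)⁻¹‖ is the operator norm of the inverse. In particular, with s = 1/ε this is the operator-theoretic interpretation of the asymptotic expansion: ‖(A + ε⁻¹B)⁻¹ f − A⁻¹ Σ_{i=0}^{k} (−ε⁻¹ B A⁻¹)^i f‖ ≤ c·ε^{−(k+1)}·‖(B A⁻¹)^{k+1}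 f‖ with c = ‖(A + ε⁻¹B)⁻¹‖. (Remark following Theorem 3.5.) -/
/-- Operator-theoretic interpretation of the asymptotic expansion (remark after Theorem 3.5):
if `A` is invertible with continuous inverse `A'` and `A + s•B` is invertible with continuous
inverse `M`, then the truncated Neumann-series approximation satisfies
`‖M f − A' Σ_{i≤k} (−s)^i (B∘A')^i f‖ ≤ ‖M‖ s^{k+1} ‖(B∘A')^{k+1} f‖`. -/
theorem neumann_series_operator_estimate {X Y : Type*}
    [NormedAddCommGroup X] [NormedSpace ℝ X] [CompleteSpace X]
    [NormedAddCommGroup Y] [NormedSpace ℝ Y] [CompleteSpace Y]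
    (A B : X →L[ℝ] Y) (A' : Y →L[ℝ] X)
    (hA1 : ∀ x : X, A' (A x) = x) (hA2 : ∀ y : Y, A (A' y) = y)
    (s : ℝ) (hs : 0 < s) (M : Y →L[ℝ] X)
    (hM1 : ∀ x : X, M (A x + s • B x) = x)
    (hM2 : ∀ y : Y, A (M y) + s • B (M y) = y)
    (k : ℕ) (f : Y) :
    ‖M f - A' (∑ i ∈ Finset.range (k + 1), (-s) ^ i • ((B.comp A') ^ i) f)‖
      ≤ ‖M‖ * s ^ (k + 1) * ‖((B.comp A') ^ (k + 1)) f‖ := by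
  set T := B.comp A' with hT
  set S := ∑ i ∈ Finset.range (k + 1), (-s) ^ i • (T ^ i) f with hS
  have key : A (A' S) + s • B (A' S) = f - (-s) ^ (k + 1) • (T ^ (k + 1)) f := by
    rw [hA2]
    have hBS : B (A' S) = T S := rfl
    rw [hBS]
    have hTS : T S = ∑ i ∈ Finset.range (k + 1), (-s) ^ i • (T ^ (i + 1)) f := by
      rw [hS, map_sum]
      refine Finset.sum_congr rfl fun i _ => ?_
      rw [map_smul, pow_succ']
      rfl
    rw [hTS]
    calc S + s • ∑ i ∈ Finset.range (k + 1), (-s) ^ i • (T ^ (i + 1)) f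
        = ∑ i ∈ Finset.range (k + 1),
            ((-s) ^ i • (T ^ i) f - (-s) ^ (i + 1) • (T ^ (i + 1)) f) := by
          rw [hS, Finset.smul_sum, ← Finset.sum_add_distrib]
          refine Finset.sum_congr rfl fun i _ => ?_
          simp only [pow_succ, smul_smul, sub_eq_add_neg, ← neg_smul]
          congr 1
          ring
      _ = (-s) ^ 0 • (T ^ 0) f - (-s) ^ (k + 1) • (T ^ (k + 1)) f :=
          Finset.sum_range_sub' (fun i => (-s) ^ i • (T ^ i) f) (k + 1)
      _ = f - (-s) ^ (k + 1) • (T ^ (k + 1)) f := by simp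
  have hAS : A' S = M f - (-s) ^ (k + 1) • M ((T ^ (k + 1)) f) := by
    have := hM1 (A' S)
    rw [key] at this
    rw [← this, map_sub, map_smul]
  rw [hAS]
  have : M f - (M f - (-s) ^ (k + 1) • M ((T ^ (k + 1)) f))
      = (-s) ^ (k + 1) • M ((T ^ (k + 1)) f) := by abel
  rw [this, norm_smul]
  have habs : ‖(-s) ^ (k + 1)‖ = s ^ (k + 1) := by
    rw [norm_pow, Real.norm_eq_abs, abs_neg, abs_of_pos hs]
  rw [habs, mul_comm (‖M‖) (s ^ (k + 1)), mul_assoc]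
  exact mul_le_mul_of_nonneg_left (M.le_opNorm _) (pow_nonneg hs.le _)
end

section
/- Let ε > 0, f ∈ V*, g ∈ Q*, and let (u_ε, p_ε) ∈ V × Q solve the ε-Stokes system ES(ε). Then ‖u_ε‖_V² + ε·‖p_ε‖_Q² ≤ ‖f‖_{V*}² + ε·‖g‖_{Q*}². (Energy bound established in the proof of Theorem 4.2.) -/
open scoped RealInnerProductSpace

/-- Energy bound from the proof of Theorem 4.2: any solution of ES(ε) satisfies
`‖u_ε‖² + ε‖p_ε‖² ≤ ‖f‖² + ε‖g‖²`. -/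
theorem epsStokes_energy_bound {V Q : Type*}
    [NormedAddCommGroup V] [InnerProductSpace ℝ V] [CompleteSpace V]
    [NormedAddCommGroup Q] [InnerProductSpace ℝ Q] [CompleteSpace Q]
    (b : V →L[ℝ] Q →L[ℝ] ℝ)
    (ε : ℝ) (hε : 0 < ε) (f : V →L[ℝ] ℝ) (g : Q →L[ℝ] ℝ)
    (uε : V) (pε : Q)
    (hES1 : ∀ φ : V, ⟪uε, φ⟫ + b φ pε = f φ)
    (hES2 : ∀ ψ : Q, ε * ⟪pε, ψ⟫ - b uε ψ = ε * g ψ) :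
    ‖uε‖ ^ 2 + ε * ‖pε‖ ^ 2 ≤ ‖f‖ ^ 2 + ε * ‖g‖ ^ 2 := by
  have h1 := hES1 uε
  have h2 := hES2 pε
  rw [real_inner_self_eq_norm_sq] at h1 h2
  have hf : f uε ≤ ‖f‖ * ‖uε‖ := le_trans (le_abs_self _) (f.le_opNorm uε)
  have hg : g pε ≤ ‖g‖ * ‖pε‖ := le_trans (le_abs_self _) (g.le_opNorm pε)
  nlinarith [sq_nonneg (‖f‖ - ‖uε‖), sq_nonneg (‖g‖ - ‖pε‖), hε.le,
    mul_le_mul_of_nonneg_left hg hε.le]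
end

section
/- Assume the Nečas-type inf-sup bound with seminorm N and constant c_N. Let f ∈ V*, g ∈ Q*, and for ε ∈ (0,1] let (u_ε, p_ε) ∈ V × Q solve the ε-Stokes system ES(ε). Then ‖u_ε‖_V ≤ (‖f‖_{V*}² + ‖g‖_{Q*}²)^{1/2}, √ε·‖p_ε‖_Q ≤ (‖f‖_{V*}² + ‖g‖_{Q*}²)^{1/2}, and N(p_ε) ≤ c_N·((‖f‖_{V*}² + ‖g‖_{Q*}²)^{1/2} + ‖f‖_{V*}); in particular the solutions are bounded uniformly in ε ∈ (0,1]. (Boundedness part of Theorem 4.2.) -/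
open scoped RealInnerProductSpace

/-- Boundedness part of Theorem 4.2: the solutions of ES(ε) are bounded uniformly for
ε ∈ (0,1]: `‖u_ε‖ ≤ (‖f‖² + ‖g‖²)^{1/2}`, `√ε ‖p_ε‖ ≤ (‖f‖² + ‖g‖²)^{1/2}`, and
`N(p_ε) ≤ c_N ((‖f‖² + ‖g‖²)^{1/2} + ‖f‖)` under the Nečas-type inf-sup bound. -/
theorem epsStokes_uniform_boundedness {V Q : Type*}
    [NormedAddCommGroup V] [InnerProductSpace ℝ V] [CompleteSpace V]
    [NormedAddCommGroup Q] [InnerProductSpace ℝ Q] [CompleteSpace Q]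
    (b : V →L[ℝ] Q →L[ℝ] ℝ)
    (N : Seminorm ℝ Q) (cN : ℝ) (hcN : 0 < cN)
    (hNecas : ∀ q : Q, N q ≤ cN * ‖b.flip q‖)
    (f : V →L[ℝ] ℝ) (g : Q →L[ℝ] ℝ)
    (u : ℝ → V) (p : ℝ → Q)
    (hsol : ∀ ε : ℝ, 0 < ε → ε ≤ 1 →
      (∀ φ : V, ⟪u ε, φ⟫ + b φ (p ε) = f φ) ∧
      (∀ ψ : Q, ε * ⟪p ε, ψ⟫ - b (u ε) ψ = ε * g ψ)) :
    ∀ ε : ℝ, 0 < ε → ε ≤ 1 →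
      ‖u ε‖ ≤ Real.sqrt (‖f‖ ^ 2 + ‖g‖ ^ 2) ∧
      Real.sqrt ε * ‖p ε‖ ≤ Real.sqrt (‖f‖ ^ 2 + ‖g‖ ^ 2) ∧
      N (p ε) ≤ cN * (Real.sqrt (‖f‖ ^ 2 + ‖g‖ ^ 2) + ‖f‖) := by
  intro ε hε hε1
  obtain ⟨h1, h2⟩ := hsol ε hε hε1
  have hSnn : (0:ℝ) ≤ ‖f‖ ^ 2 + ‖g‖ ^ 2 := by positivity
  -- energy estimate
  have e1 := h1 (u ε)
  have e2 := h2 (p ε)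
  rw [real_inner_self_eq_norm_sq] at e1 e2
  have hf : f (u ε) ≤ ‖f‖ * ‖u ε‖ := (le_abs_self _).trans (f.le_opNorm _)
  have hg : g (p ε) ≤ ‖g‖ * ‖p ε‖ := (le_abs_self _).trans (g.le_opNorm _)
  have hg' : ε * g (p ε) ≤ ε * (‖g‖ * ‖p ε‖) :=
    mul_le_mul_of_nonneg_left hg hε.le
  have key : ‖u ε‖ ^ 2 + ε * ‖p ε‖ ^ 2 ≤ ‖f‖ ^ 2 + ‖g‖ ^ 2 := by
    nlinarith [sq_nonneg (‖f‖ - ‖u ε‖), sq_nonneg (‖g‖ - ‖p ε‖),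
      mul_nonneg hε.le (sq_nonneg (‖g‖ - ‖p ε‖)), sq_nonneg ‖g‖]
  have hu2 : ‖u ε‖ ^ 2 ≤ ‖f‖ ^ 2 + ‖g‖ ^ 2 := by
    nlinarith [mul_nonneg hε.le (sq_nonneg ‖p ε‖)]
  have hu : ‖u ε‖ ≤ Real.sqrt (‖f‖ ^ 2 + ‖g‖ ^ 2) :=
    (Real.le_sqrt (norm_nonneg _) hSnn).mpr hu2
  refine ⟨hu, ?_, ?_⟩
  · have : (Real.sqrt ε * ‖p ε‖) ^ 2 ≤ ‖f‖ ^ 2 + ‖g‖ ^ 2 := by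
      rw [mul_pow, Real.sq_sqrt hε.le]
      nlinarith [sq_nonneg ‖u ε‖]
    exact (Real.le_sqrt (by positivity) hSnn).mpr this
  · have hb : ‖b.flip (p ε)‖ ≤ ‖u ε‖ + ‖f‖ := by
      refine ContinuousLinearMap.opNorm_le_bound _ (by positivity) fun φ => ?_
      have : b.flip (p ε) φ = f φ - ⟪u ε, φ⟫ := by
        have := h1 φ
        simp only [ContinuousLinearMap.flip_apply]
        linarith
      rw [this]
      calc |f φ - ⟪u ε, φ⟫| ≤ |f φ| + |⟪u ε, φ⟫| := abs_sub _ _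
        _ ≤ ‖f‖ * ‖φ‖ + ‖u ε‖ * ‖φ‖ :=
          add_le_add (f.le_opNorm φ) (abs_real_inner_le_norm _ _)
        _ = (‖u ε‖ + ‖f‖) * ‖φ‖ := by ring
    calc N (p ε) ≤ cN * ‖b.flip (p ε)‖ := hNecas _
      _ ≤ cN * (Real.sqrt (‖f‖ ^ 2 + ‖g‖ ^ 2) + ‖f‖) := by
        apply mul_le_mul_of_nonneg_left _ hcN.le
        linarith
end

section
/- Let f ∈ V*, g ∈ Q*, let K := { v ∈ V : b(v,ψ) = 0 for all ψ ∈ Q } (the divergence-free subspace), and suppose u_S ∈ K satisfies ⟨u_S,φ⟩_V = f(φ) for all φ ∈ K. For each ε > 0 let (u_ε, p_ε) ∈ V × Q solve the ε-Stokes system ES(ε). Then u_ε converges weakly to u_S in V as ε → 0⁺, i.e. for every w ∈ V, ⟨u_ε, w⟩_V → ⟨u_S, w⟩_V as ε → 0 along (0,∞). (Weak convergence part of Theorem 4.2.) -/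
open scoped RealInnerProductSpace
open Filter

set_option maxHeartbeats 1000000

/-- Weak convergence part of Theorem 4.2: if `u_S` lies in the divergence-free subspace
`K = {v : b(v,ψ) = 0 ∀ψ}` and satisfies `⟪u_S,φ⟫ = f(φ)` for all `φ ∈ K`, then the ε-Stokes
velocities converge weakly to `u_S` in `V` as ε → 0⁺. -/
theorem epsStokes_weak_convergence_to_stokes {V Q : Type*}
    [NormedAddCommGroup V] [InnerProductSpace ℝ V] [CompleteSpace V]
    [NormedAddCommGroup Q] [InnerProductSpace ℝ Q] [CompleteSpace Q]
    (b : V →L[ℝ] Q →L[ℝ] ℝ)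
    (f : V →L[ℝ] ℝ) (g : Q →L[ℝ] ℝ)
    (uS : V)
    (huSK : ∀ ψ : Q, b uS ψ = 0)
    (huS : ∀ φ : V, (∀ ψ : Q, b φ ψ = 0) → ⟪uS, φ⟫ = f φ)
    (u : ℝ → V) (p : ℝ → Q)
    (hsol : ∀ ε : ℝ, 0 < ε →
      (∀ φ : V, ⟪u ε, φ⟫ + b φ (p ε) = f φ) ∧
      (∀ ψ : Q, ε * ⟪p ε, ψ⟫ - b (u ε) ψ = ε * g ψ)) :
    ∀ w : V, Filter.Tendsto (fun ε : ℝ => ⟪u ε, w⟫)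
      (nhdsWithin 0 (Set.Ioi 0)) (nhds ⟪uS, w⟫) := by
  classical
  set M : ℝ := Real.sqrt (‖f‖ ^ 2 + ‖g‖ ^ 2) with hM
  have hM0 : 0 ≤ M := Real.sqrt_nonneg _
  have hMsq : M ^ 2 = ‖f‖ ^ 2 + ‖g‖ ^ 2 := Real.sq_sqrt (by positivity)
  -- a priori bounds
  have hbound : ∀ ε : ℝ, 0 < ε → ε ≤ 1 →
      ‖u ε‖ ≤ M ∧ ε * ‖p ε‖ ≤ Real.sqrt ε * M := by
    intro ε hε hε1
    obtain ⟨h1, h2⟩ := hsol ε hε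
    have e1 := h1 (u ε)
    have e2 := h2 (p ε)
    rw [real_inner_self_eq_norm_sq] at e1 e2
    have hf : f (u ε) ≤ ‖f‖ * ‖u ε‖ :=
      (le_abs_self _).trans (by simpa [Real.norm_eq_abs] using f.le_opNorm (u ε))
    have hg : g (p ε) ≤ ‖g‖ * ‖p ε‖ :=
      (le_abs_self _).trans (by simpa [Real.norm_eq_abs] using g.le_opNorm (p ε))
    have hsum : ‖u ε‖ ^ 2 + ε * ‖p ε‖ ^ 2 = f (u ε) + ε * g (p ε) := by linarith
    have hkey : ‖u ε‖ ^ 2 + ε * ‖p ε‖ ^ 2 ≤ ‖f‖ ^ 2 + ε * ‖g‖ ^ 2 := by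
      nlinarith [sq_nonneg (‖u ε‖ - ‖f‖), sq_nonneg (‖p ε‖ - ‖g‖), hε.le,
        mul_le_mul_of_nonneg_left hg hε.le]
    constructor
    · have h1' : ‖u ε‖ ^ 2 ≤ M ^ 2 := by
        have : ε * ‖g‖ ^ 2 ≤ ‖g‖ ^ 2 := by nlinarith [sq_nonneg ‖g‖]
        nlinarith [mul_nonneg hε.le (sq_nonneg ‖p ε‖)]
      nlinarith [norm_nonneg (u ε)]
    · have h2' : (ε * ‖p ε‖) ^ 2 ≤ (Real.sqrt ε * M) ^ 2 := by
        have hsq : Real.sqrt ε ^ 2 = ε := Real.sq_sqrt hε.le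
        have : ε * ‖p ε‖ ^ 2 ≤ M ^ 2 := by
          have : ε * ‖g‖ ^ 2 ≤ ‖g‖ ^ 2 := by nlinarith [sq_nonneg ‖g‖]
          nlinarith [sq_nonneg ‖u ε‖]
        calc (ε * ‖p ε‖) ^ 2 = ε * (ε * ‖p ε‖ ^ 2) := by ring
          _ ≤ ε * M ^ 2 := by nlinarith
          _ = (Real.sqrt ε * M) ^ 2 := by rw [mul_pow, hsq]
      nlinarith [mul_nonneg hε.le (norm_nonneg (p ε)),
        mul_nonneg (Real.sqrt_nonneg ε) hM0]
  -- bound on b (u ε)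
  have hbu : ∀ ε : ℝ, 0 < ε → ε ≤ 1 → ∀ q : Q,
      |b (u ε) q| ≤ (Real.sqrt ε * M + ε * ‖g‖) * ‖q‖ := by
    intro ε hε hε1 q
    have h2 := (hsol ε hε).2 q
    have hval : b (u ε) q = ε * ⟪p ε, q⟫ - ε * g q := by linarith
    have hpq : |⟪p ε, q⟫| ≤ ‖p ε‖ * ‖q‖ := abs_real_inner_le_norm _ _
    have hgq : |g q| ≤ ‖g‖ * ‖q‖ :=
      (by simpa [Real.norm_eq_abs] using g.le_opNorm q)
    have hpb := (hbound ε hε hε1).2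
    calc |b (u ε) q| ≤ ε * |⟪p ε, q⟫| + ε * |g q| := by
          rw [hval]
          calc |ε * ⟪p ε, q⟫ - ε * g q| ≤ |ε * ⟪p ε, q⟫| + |ε * g q| := abs_sub _ _
            _ = ε * |⟪p ε, q⟫| + ε * |g q| := by
                rw [abs_mul, abs_mul, abs_of_pos hε]
      _ ≤ ε * (‖p ε‖ * ‖q‖) + ε * (‖g‖ * ‖q‖) := by
          gcongr
      _ = (ε * ‖p ε‖) * ‖q‖ + (ε * ‖g‖) * ‖q‖ := by ring
      _ ≤ (Real.sqrt ε * M) * ‖q‖ + (ε * ‖g‖) * ‖q‖ := by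
          gcongr
      _ = (Real.sqrt ε * M + ε * ‖g‖) * ‖q‖ := by ring
  -- the Riesz-represented operator B
  set B : V →L[ℝ] Q :=
    ((InnerProductSpace.toDual ℝ Q).symm.toContinuousLinearEquiv.toContinuousLinearMap).comp b
    with hBdef
  have hBapp : ∀ (v : V) (ψ : Q), ⟪B v, ψ⟫ = b v ψ := by
    intro v ψ
    simp [hBdef, InnerProductSpace.toDual_symm_apply]
  haveI : CompleteSpace (LinearMap.ker B) := by exact (ContinuousLinearMap.isClosed_ker B).completeSpace_coe
  -- range of adjoint vs kernel
  have horth : (LinearMap.range (ContinuousLinearMap.adjoint B : Q →ₗ[ℝ] V))ᗮ = LinearMap.ker (B : V →ₗ[ℝ] Q) := by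
    ext x
    rw [Submodule.mem_orthogonal, LinearMap.mem_ker]
    constructor
    · intro h
      have h' : ∀ q : Q, ⟪q, B x⟫ = 0 := by
        intro q
        rw [← ContinuousLinearMap.adjoint_inner_left]
        exact h _ (LinearMap.mem_range_self _ q)
      have := h' (B x)
      rwa [inner_self_eq_zero] at this
    · rintro h v ⟨q, rfl⟩
      rw [ContinuousLinearMap.coe_coe] at h ⊢; rw [ContinuousLinearMap.adjoint_inner_left, h, inner_zero_right]
  intro w
  obtain ⟨y, hy, z, hz, hw⟩ := Submodule.exists_add_mem_mem_orthogonal (K := LinearMap.ker (B : V →ₗ[ℝ] Q)) w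
  have hby : ∀ ψ : Q, b y ψ = 0 := by
    intro ψ
    rw [← hBapp]
    rw [LinearMap.mem_ker, ContinuousLinearMap.coe_coe] at hy
    rw [hy, inner_zero_left]
  have huSmem : uS ∈ LinearMap.ker (B : V →ₗ[ℝ] Q) := by
    rw [LinearMap.mem_ker, ContinuousLinearMap.coe_coe]
    refine ext_inner_right ℝ fun ψ => ?_
    rw [hBapp, huSK ψ, inner_zero_left]
  have hzuS : ⟪uS, z⟫ = 0 := (Submodule.mem_orthogonal _ z).mp hz uS huSmem
  have hconst : ⟪uS, w⟫ = f y := by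
    rw [hw, inner_add_right, hzuS, add_zero, huS y hby]
  -- z lies in the closure of the range of the adjoint
  have hzcl : z ∈ closure ((LinearMap.range (ContinuousLinearMap.adjoint B : Q →ₗ[ℝ] V) : Submodule ℝ V) :
      Set V) := by
    rw [← Submodule.topologicalClosure_coe, ← Submodule.orthogonal_orthogonal_eq_closure, horth]
    exact hz
  -- the key weak convergence of the orthogonal component
  have key : Tendsto (fun ε : ℝ => ⟪u ε, z⟫) (nhdsWithin 0 (Set.Ioi 0)) (nhds 0) := by
    rw [NormedAddCommGroup.tendsto_nhds_zero]
    intro η hη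
    obtain ⟨v, hvmem, hvz⟩ := Metric.mem_closure_iff.mp hzcl (η / (2 * (M + 1))) (by positivity)
    obtain ⟨q, rfl⟩ := hvmem
    have h1 : ∀ᶠ ε in nhdsWithin (0:ℝ) (Set.Ioi 0), ε ∈ Set.Ioc (0:ℝ) 1 :=
      Ioc_mem_nhdsGT_of_mem (by simp)
    have hc : Tendsto (fun ε : ℝ => (Real.sqrt ε * M + ε * ‖g‖) * ‖q‖)
        (nhdsWithin 0 (Set.Ioi 0)) (nhds 0) := by
      have hcont : ContinuousAt (fun ε : ℝ => (Real.sqrt ε * M + ε * ‖g‖) * ‖q‖) 0 := by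
        exact (((Real.continuous_sqrt.mul continuous_const).add
          (continuous_id.mul continuous_const)).mul continuous_const).continuousAt
      have := hcont.tendsto.mono_left (nhdsWithin_le_nhds (s := Set.Ioi (0:ℝ)))
      simpa using this
    have h2 := hc.eventually_lt_const (show (0:ℝ) < η / 2 by positivity)
    filter_upwards [h1, h2] with ε hε1 hε2
    have hε : 0 < ε := hε1.1
    have hεle : ε ≤ 1 := hε1.2
    have hzdec : ⟪u ε, z⟫ = ⟪u ε, z - (ContinuousLinearMap.adjoint B) q⟫
        + ⟪u ε, (ContinuousLinearMap.adjoint B) q⟫ := by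
      rw [← inner_add_right, sub_add_cancel]
    have hterm1 : |⟪u ε, z - (ContinuousLinearMap.adjoint B) q⟫| < η / 2 := by
      have h3 := abs_real_inner_le_norm (u ε) (z - (ContinuousLinearMap.adjoint B) q)
      have h4 : ‖z - (ContinuousLinearMap.adjoint B) q‖ < η / (2 * (M + 1)) := by
        rwa [dist_eq_norm] at hvz
      have h5 : ‖u ε‖ ≤ M := (hbound ε hε hεle).1
      have h6 : (0:ℝ) ≤ ‖z - (ContinuousLinearMap.adjoint B) q‖ := norm_nonneg _
      calc |⟪u ε, z - (ContinuousLinearMap.adjoint B) q⟫|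
          ≤ ‖u ε‖ * ‖z - (ContinuousLinearMap.adjoint B) q‖ := h3
        _ ≤ M * ‖z - (ContinuousLinearMap.adjoint B) q‖ := by gcongr
        _ < M * (η / (2 * (M + 1))) + (η / (2 * (M + 1))) := by nlinarith
        _ = (M + 1) * (η / (2 * (M + 1))) := by ring
        _ = η / 2 := by field_simp
    have hterm2 : |⟪u ε, (ContinuousLinearMap.adjoint B) q⟫| < η / 2 := by
      have : ⟪u ε, (ContinuousLinearMap.adjoint B) q⟫ = b (u ε) q := by
        rw [ContinuousLinearMap.adjoint_inner_right, hBapp]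
      rw [this]
      exact lt_of_le_of_lt (hbu ε hε hεle q) hε2
    calc ‖⟪u ε, z⟫‖ = |⟪u ε, z - (ContinuousLinearMap.adjoint B) q⟫
          + ⟪u ε, (ContinuousLinearMap.adjoint B) q⟫| := by rw [Real.norm_eq_abs, hzdec]
      _ ≤ |⟪u ε, z - (ContinuousLinearMap.adjoint B) q⟫|
          + |⟪u ε, (ContinuousLinearMap.adjoint B) q⟫| := abs_add_le _ _
      _ < η / 2 + η / 2 := add_lt_add hterm1 hterm2
      _ = η := by ring
  -- put everything together
  have heq : ∀ᶠ ε in nhdsWithin (0:ℝ) (Set.Ioi 0),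
      f y + ⟪u ε, z⟫ = ⟪u ε, w⟫ := by
    filter_upwards [self_mem_nhdsWithin] with ε (hε : (0:ℝ) < ε)
    have h1 := (hsol ε hε).1 y
    rw [hby (p ε), add_zero] at h1
    rw [hw, inner_add_right, h1]
  have hT : Tendsto (fun ε : ℝ => f y + ⟪u ε, z⟫) (nhdsWithin 0 (Set.Ioi 0))
      (nhds (f y + 0)) := tendsto_const_nhds.add key
  have := hT.congr' heq
  rwa [add_zero, ← hconst] at this
end

section
/- Let ε > 0, f ∈ V*, g ∈ Q*, let (u_ε, p_ε) ∈ V × Q solve the ε-Stokes system ES(ε), and let (u_S, p_S) ∈ V × Q solve the Stokes system S (same f). Then ‖u_ε − u_S‖_V ≤ (√ε/2)·(‖p_S‖_Q + ‖g‖_{Q*}). (Velocity estimate of Theorem 4.4: rate √ε for the ε-Stokes approximation of the Stokes problem when the Stokes pressure lies in Q.) -/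
open scoped RealInnerProductSpace

/-- Velocity estimate of Theorem 4.4: `‖u_ε − u_S‖ ≤ (√ε/2)(‖p_S‖ + ‖g‖)`. -/
theorem epsStokes_velocity_rate {V Q : Type*}
    [NormedAddCommGroup V] [InnerProductSpace ℝ V] [CompleteSpace V]
    [NormedAddCommGroup Q] [InnerProductSpace ℝ Q] [CompleteSpace Q]
    (b : V →L[ℝ] Q →L[ℝ] ℝ)
    (ε : ℝ) (hε : 0 < ε) (f : V →L[ℝ] ℝ) (g : Q →L[ℝ] ℝ)
    (uε : V) (pε : Q) (uS : V) (pS : Q)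
    (hES1 : ∀ φ : V, ⟪uε, φ⟫ + b φ pε = f φ)
    (hES2 : ∀ ψ : Q, ε * ⟪pε, ψ⟫ - b uε ψ = ε * g ψ)
    (hS1 : ∀ φ : V, ⟪uS, φ⟫ + b φ pS = f φ)
    (hS2 : ∀ ψ : Q, b uS ψ = 0) :
    ‖uε - uS‖ ≤ (Real.sqrt ε / 2) * (‖pS‖ + ‖g‖) := by
  set e := uε - uS with he
  set q := pε - pS with hq
  -- b e q in terms of the equations
  have hbeq : b e q = ε * ⟪pε, q⟫ - ε * g q := by
    have h2 := hES2 q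
    have h3 := hS2 q
    have : b e q = b uε q - b uS q := by simp [he, map_sub]
    rw [this, h3]
    linarith
  -- energy identity
  have hener : ⟪e, e⟫ = - b e q := by
    have h1 := hES1 e
    have h2 := hS1 e
    have hinner : ⟪e, e⟫ = ⟪uε, e⟫ - ⟪uS, e⟫ := by
      rw [he, inner_sub_left]
    have hb : b e q = b e pε - b e pS := by
      rw [hq, map_sub]
    linarith
  have hnorm : ‖e‖ ^ 2 = ε * (g q - ⟪pε, q⟫) := by
    rw [← real_inner_self_eq_norm_sq, hener, hbeq]; ring
  have hiq : ⟪pε, q⟫ = ‖q‖ ^ 2 + ⟪pS, q⟫ := by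
    have : pε = q + pS := by rw [hq]; abel
    rw [this, inner_add_left, real_inner_self_eq_norm_sq]
  have hg : g q ≤ ‖g‖ * ‖q‖ := by
    calc g q ≤ ‖g q‖ := le_abs_self _
    _ ≤ ‖g‖ * ‖q‖ := g.le_opNorm q
  have hps : -(‖pS‖ * ‖q‖) ≤ ⟪pS, q⟫ := by
    have := abs_real_inner_le_norm pS q
    cases' abs_le.mp this with h _
    linarith
  have hkey : ‖e‖ ^ 2 ≤ ε * ((‖pS‖ + ‖g‖) ^ 2 / 4) := by
    rw [hnorm, hiq]
    have h1 : g q - (‖q‖ ^ 2 + ⟪pS, q⟫) ≤ (‖pS‖ + ‖g‖) ^ 2 / 4 := by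
      nlinarith [sq_nonneg (‖q‖ - (‖pS‖ + ‖g‖) / 2)]
    exact mul_le_mul_of_nonneg_left h1 hε.le
  have hrhs : (Real.sqrt ε / 2 * (‖pS‖ + ‖g‖)) ^ 2 = ε * ((‖pS‖ + ‖g‖) ^ 2 / 4) := by
    rw [mul_pow, div_pow, Real.sq_sqrt hε.le]; ring
  have hrhs_nonneg : 0 ≤ Real.sqrt ε / 2 * (‖pS‖ + ‖g‖) := by
    positivity
  nlinarith [norm_nonneg e, hkey, hrhs]
end

section
/- Assume the Nečas-type inf-sup bound with seminorm N and constant c_N. Let ε > 0, f ∈ V*, g ∈ Q*, let (u_ε, p_ε) ∈ V × Q solve the ε-Stokes system ES(ε), and let (u_S, p_S) ∈ V × Q solve the Stokes system S (same f). Then N(p_ε − p_S) ≤ c_N·(√ε/2)·(‖p_S‖_Q + ‖g‖_{Q*}). (Pressure estimate of Theorem 4.4.) -/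
open scoped RealInnerProductSpace

/-- Pressure estimate of Theorem 4.4: under the Nečas-type inf-sup bound,
`N(p_ε − p_S) ≤ c_N (√ε/2)(‖p_S‖ + ‖g‖)`. -/
theorem epsStokes_pressure_rate {V Q : Type*}
    [NormedAddCommGroup V] [InnerProductSpace ℝ V] [CompleteSpace V]
    [NormedAddCommGroup Q] [InnerProductSpace ℝ Q] [CompleteSpace Q]
    (b : V →L[ℝ] Q →L[ℝ] ℝ)
    (N : Seminorm ℝ Q) (cN : ℝ) (hcN : 0 < cN)
    (hNecas : ∀ q : Q, N q ≤ cN * ‖b.flip q‖)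
    (ε : ℝ) (hε : 0 < ε) (f : V →L[ℝ] ℝ) (g : Q →L[ℝ] ℝ)
    (uε : V) (pε : Q) (uS : V) (pS : Q)
    (hES1 : ∀ φ : V, ⟪uε, φ⟫ + b φ pε = f φ)
    (hES2 : ∀ ψ : Q, ε * ⟪pε, ψ⟫ - b uε ψ = ε * g ψ)
    (hS1 : ∀ φ : V, ⟪uS, φ⟫ + b φ pS = f φ)
    (hS2 : ∀ ψ : Q, b uS ψ = 0) :
    N (pε - pS) ≤ cN * (Real.sqrt ε / 2) * (‖pS‖ + ‖g‖) := by
  set e := uε - uS with he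
  set q := pε - pS with hq
  set M := ‖pS‖ + ‖g‖ with hM
  have hM0 : 0 ≤ M := by positivity
  -- difference of first equations
  have h1 : ∀ φ : V, ⟪e, φ⟫ + b φ q = 0 := by
    intro φ
    have := hES1 φ
    have h2 := hS1 φ
    have : ⟪uε, φ⟫ + b φ pε - (⟪uS, φ⟫ + b φ pS) = 0 := by rw [this, h2]; ring
    have h3 : ⟪e, φ⟫ = ⟪uε, φ⟫ - ⟪uS, φ⟫ := by rw [he, inner_sub_left]
    have h4 : b φ q = b φ pε - b φ pS := by rw [hq, map_sub]
    rw [h3, h4]; linarith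
  -- energy identity
  have h2 : ‖e‖ ^ 2 = ε * (g q - ⟪pS, q⟫) - ε * ‖q‖ ^ 2 := by
    have hbe : b e q = ε * ⟪pε, q⟫ - ε * g q := by
      have h := hES2 q
      have h' := hS2 q
      have : b e q = b uε q - b uS q := by simp [he, map_sub]
      rw [this, h']
      linarith [h]
    have hee : ⟪e, e⟫ + b e q = 0 := h1 e
    have hpq : ⟪pε, q⟫ = ‖q‖ ^ 2 + ⟪pS, q⟫ := by
      have : pε = q + pS := by simp [hq]
      rw [this, inner_add_left, real_inner_self_eq_norm_sq]
    have : ‖e‖ ^ 2 = -b e q := by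
      rw [← real_inner_self_eq_norm_sq]; linarith
    rw [this, hbe, hpq]; ring
  -- bound on the right side
  have hrhs : g q - ⟪pS, q⟫ ≤ M * ‖q‖ := by
    have h1' : g q ≤ ‖g‖ * ‖q‖ := le_trans (le_abs_self _) (g.le_opNorm q)
    have h2' : -⟪pS, q⟫ ≤ ‖pS‖ * ‖q‖ := by
      have := abs_real_inner_le_norm pS q
      have := neg_abs_le ⟪pS, q⟫
      nlinarith [abs_real_inner_le_norm pS q, neg_abs_le ⟪pS, q⟫]
    calc g q - ⟪pS, q⟫ ≤ ‖g‖ * ‖q‖ + ‖pS‖ * ‖q‖ := by linarith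
      _ = M * ‖q‖ := by rw [hM]; ring
  -- ‖e‖² ≤ ε * (M/2)²
  have hqgoal : pε - pS = q := hq.symm
  clear_value e q M
  have he2 : ‖e‖ ^ 2 ≤ ε * (M / 2) ^ 2 := by
    have hstep : ε * (g q - ⟪pS, q⟫) ≤ ε * (M * ‖q‖) :=
      mul_le_mul_of_nonneg_left hrhs hε.le
    nlinarith [mul_nonneg hε.le (sq_nonneg (‖q‖ - M / 2)), hstep, h2]
  have heM : ‖e‖ ≤ Real.sqrt ε * (M / 2) := by
    have h := Real.sqrt_le_sqrt he2
    rw [Real.sqrt_sq (norm_nonneg e)] at h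
    calc ‖e‖ ≤ Real.sqrt (ε * (M / 2) ^ 2) := h
      _ = Real.sqrt ε * (M / 2) := by
          rw [Real.sqrt_mul hε.le, Real.sqrt_sq (by positivity)]
  -- the flipped operator norm is bounded by ‖e‖
  have hflip : ‖b.flip q‖ ≤ ‖e‖ := by
    apply ContinuousLinearMap.opNorm_le_bound _ (norm_nonneg e)
    intro φ
    have hb : b φ q = -⟪e, φ⟫ := by linarith [h1 φ]
    have : ‖(b.flip q) φ‖ = ‖⟪e, φ⟫‖ := by
      simp [ContinuousLinearMap.flip_apply, hb]
    rw [this]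
    exact norm_inner_le_norm e φ
  calc N q ≤ cN * ‖b.flip q‖ := hNecas q
    _ ≤ cN * ‖e‖ := by nlinarith
    _ ≤ cN * (Real.sqrt ε * (M / 2)) := by nlinarith
    _ = cN * (Real.sqrt ε / 2) * M := by ring
end

section
/- Assume the Nečas-type inf-sup bound with seminorm N and constant c_N. Let f ∈ V*, g ∈ Q*, let (u_S, p_S) ∈ V × Q solve the Stokes system S, and for each ε > 0 let (u_ε, p_ε) ∈ V × Q solve the ε-Stokes system ES(ε). Then ‖u_ε − u_S‖_V → 0 and N(p_ε − p_S) → 0 as ε → 0 along (0,∞). (Strong convergence of the ε-Stokes solutions to the Stokes solution, Theorems 4.3–4.4, under the assumption that the Stokes pressure lies in Q.) -/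
open scoped RealInnerProductSpace

/-- Strong convergence of the ε-Stokes solutions to the Stokes solution as ε → 0⁺
(Theorems 4.3–4.4): `‖u_ε − u_S‖ → 0` and `N(p_ε − p_S) → 0`. -/
theorem epsStokes_strong_convergence_to_stokes {V Q : Type*}
    [NormedAddCommGroup V] [InnerProductSpace ℝ V] [CompleteSpace V]
    [NormedAddCommGroup Q] [InnerProductSpace ℝ Q] [CompleteSpace Q]
    (b : V →L[ℝ] Q →L[ℝ] ℝ)
    (N : Seminorm ℝ Q) (cN : ℝ) (hcN : 0 < cN)
    (hNecas : ∀ q : Q, N q ≤ cN * ‖b.flip q‖)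
    (f : V →L[ℝ] ℝ) (g : Q →L[ℝ] ℝ)
    (uS : V) (pS : Q)
    (hS1 : ∀ φ : V, ⟪uS, φ⟫ + b φ pS = f φ)
    (hS2 : ∀ ψ : Q, b uS ψ = 0)
    (u : ℝ → V) (p : ℝ → Q)
    (hsol : ∀ ε : ℝ, 0 < ε →
      (∀ φ : V, ⟪u ε, φ⟫ + b φ (p ε) = f φ) ∧
      (∀ ψ : Q, ε * ⟪p ε, ψ⟫ - b (u ε) ψ = ε * g ψ)) :
    Filter.Tendsto (fun ε : ℝ => ‖u ε - uS‖) (nhdsWithin 0 (Set.Ioi 0)) (nhds 0) ∧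
    Filter.Tendsto (fun ε : ℝ => N (p ε - pS)) (nhdsWithin 0 (Set.Ioi 0)) (nhds 0) := by
  set C : ℝ := ‖g‖ + ‖pS‖ with hC
  have hC0 : 0 ≤ C := add_nonneg (norm_nonneg _) (norm_nonneg _)
  -- main pointwise bound on the velocity error
  have hw : ∀ ε : ℝ, 0 < ε → ‖u ε - uS‖ ≤ Real.sqrt ε * C := by
    intro ε hε
    obtain ⟨h1, h2⟩ := hsol ε hε
    set w : V := u ε - uS with hwdef
    set r : Q := p ε - pS with hrdef
    have hE1 : ∀ φ : V, ⟪w, φ⟫ + b φ r = 0 := by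
      intro φ
      have ha := h1 φ
      have hb' := hS1 φ
      have : b φ r = b φ (p ε) - b φ pS := by rw [hrdef, map_sub]
      rw [hwdef, inner_sub_left, this]
      linarith
    have hE2 : ε * ⟪p ε, r⟫ - b w r = ε * g r := by
      have ha := h2 r
      have hb' := hS2 r
      have hms := b.map_sub (u ε) uS
      have : b w r = b (u ε) r - b uS r := by
        rw [hwdef, hms, ContinuousLinearMap.sub_apply]
      rw [this, hb']
      linarith
    have hinner : ⟪p ε, r⟫ = ‖r‖ ^ 2 + ⟪pS, r⟫ := by
      have : ⟪p ε, r⟫ - ⟪pS, r⟫ = ⟪r, r⟫ := by rw [← inner_sub_left]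
      rw [real_inner_self_eq_norm_sq] at this
      linarith
    have hww := hE1 w
    rw [real_inner_self_eq_norm_sq] at hww
    have key : ‖w‖ ^ 2 + ε * ‖r‖ ^ 2 = ε * (g r - ⟪pS, r⟫) := by
      rw [hinner] at hE2; nlinarith [hww, hE2]
    have hg : |g r| ≤ ‖g‖ * ‖r‖ := by
      simpa using g.le_opNorm r
    have hp : |⟪pS, r⟫| ≤ ‖pS‖ * ‖r‖ := abs_real_inner_le_norm pS r
    have hbound : g r - ⟪pS, r⟫ ≤ C * ‖r‖ := by
      have h1' := (abs_le.mp hg).2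
      have h2' := (abs_le.mp hp).1
      rw [hC]; nlinarith
    have hkey2 : ‖w‖ ^ 2 + ε * ‖r‖ ^ 2 ≤ ε * (C * ‖r‖) := by
      rw [key]; exact mul_le_mul_of_nonneg_left hbound hε.le
    have h6 : ‖r‖ * ‖r‖ ≤ C * ‖r‖ := by
      have h5 : ε * (‖r‖ * ‖r‖) ≤ ε * (C * ‖r‖) := by nlinarith [sq_nonneg ‖w‖]
      exact le_of_mul_le_mul_left h5 hε
    have hr_le : ‖r‖ ≤ C := by
      rcases eq_or_lt_of_le (norm_nonneg r) with h | h
      · rw [← h]; exact hC0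
      · exact le_of_mul_le_mul_right h6 h
    have h7 : ε * (C * ‖r‖) ≤ ε * (C * C) :=
      mul_le_mul_of_nonneg_left (mul_le_mul_of_nonneg_left hr_le hC0) hε.le
    have h8 : 0 ≤ ε * ‖r‖ ^ 2 := mul_nonneg hε.le (sq_nonneg _)
    have hw2 : ‖w‖ ^ 2 ≤ ε * C ^ 2 := by nlinarith [hkey2, h7, h8]
    calc ‖w‖ = Real.sqrt (‖w‖ ^ 2) := by rw [Real.sqrt_sq (norm_nonneg w)]
      _ ≤ Real.sqrt (ε * C ^ 2) := Real.sqrt_le_sqrt hw2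
      _ = Real.sqrt ε * C := by
          rw [Real.sqrt_mul hε.le, Real.sqrt_sq hC0]
  -- pressure bound via the Nečas inequality
  have hp : ∀ ε : ℝ, 0 < ε → N (p ε - pS) ≤ cN * (Real.sqrt ε * C) := by
    intro ε hε
    obtain ⟨h1, h2⟩ := hsol ε hε
    have hE1 : ∀ φ : V, ⟪u ε - uS, φ⟫ + b φ (p ε - pS) = 0 := by
      intro φ
      have ha := h1 φ
      have hb' := hS1 φ
      have : b φ (p ε - pS) = b φ (p ε) - b φ pS := by rw [map_sub]
      rw [inner_sub_left, this]
      linarith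
    have hflip : ‖b.flip (p ε - pS)‖ ≤ ‖u ε - uS‖ := by
      apply ContinuousLinearMap.opNorm_le_bound _ (norm_nonneg _)
      intro φ
      have := hE1 φ
      have heq : b.flip (p ε - pS) φ = -⟪u ε - uS, φ⟫ := by
        simp only [ContinuousLinearMap.flip_apply]
        linarith
      rw [Real.norm_eq_abs, heq, abs_neg]
      exact abs_real_inner_le_norm _ _
    calc N (p ε - pS) ≤ cN * ‖b.flip (p ε - pS)‖ := hNecas _
      _ ≤ cN * ‖u ε - uS‖ := mul_le_mul_of_nonneg_left hflip hcN.le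
      _ ≤ cN * (Real.sqrt ε * C) :=
          mul_le_mul_of_nonneg_left (hw ε hε) hcN.le
  have hsq : Filter.Tendsto (fun ε : ℝ => Real.sqrt ε * C)
      (nhdsWithin 0 (Set.Ioi 0)) (nhds 0) := by
    have h := ((Real.continuous_sqrt.tendsto 0).mono_left
      (nhdsWithin_le_nhds (s := Set.Ioi (0:ℝ)))).mul_const C
    simpa using h
  constructor
  · apply squeeze_zero' (Filter.Eventually.of_forall fun ε => norm_nonneg _)
      _ hsq
    filter_upwards [self_mem_nhdsWithin] with ε hε
    exact hw ε hε
  · have hsq' : Filter.Tendsto (fun ε : ℝ => cN * (Real.sqrt ε * C))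
        (nhdsWithin 0 (Set.Ioi 0)) (nhds 0) := by
      simpa using hsq.const_mul cN
    apply squeeze_zero' (Filter.Eventually.of_forall fun ε => apply_nonneg N _)
      _ hsq'
    filter_upwards [self_mem_nhdsWithin] with ε hε
    exact hp ε hε
end
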